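/- Let h : ℝ → ℝ be a C^k function with k ≥ 1, let l ≥ k+1, and let g : ℝ → ℝ be a continuous function such that for every x, g(x) = h(x)^l or g(x) = −h(x)^l. Then g is differentiable at every zero of h, with derivative 0. -/

import Mathlib

open Asymptotics Filter

theorem stmt_12 (k l : ℕ) (hk : 1 ≤ k) (hl : k + 1 ≤ l)
    (h g : ℝ → ℝ) (hh : ContDiff ℝ k h) (hg : Continuous g)
    (hsign : ∀ x, g x = h x ^ l ∨ g x = -(h x ^ l)) :
    ∀ x, h x = 0 → HasDerivAt g 0 x := by
  intro x₀ hx₀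
  have hl2 : 2 ≤ l := le_trans (by omega) hl
  have hg0 : g x₀ = 0 := by
    rcases hsign x₀ with h1 | h1 <;> simp [h1, hx₀, zero_pow (by omega : l ≠ 0)]
  have hdiff : DifferentiableAt ℝ h x₀ :=
    (hh.differentiable (by exact_mod_cast (show k ≠ 0 by omega))).differentiableAt
  -- h =O (x - x₀)
  have hO : (fun x => h x) =O[nhds x₀] fun x => x - x₀ := by
    have := hdiff.hasDerivAt.isBigO_sub
    simpa [hx₀] using this
  -- g =O h^l
  have hOg : (fun x => g x) =O[nhds x₀] fun x => h x ^ l := by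
    apply isBigO_of_le
    intro x
    rcases hsign x with h1 | h1 <;> simp [h1]
  -- h^l =O (x - x₀)^l
  have hOl : (fun x => h x ^ l) =O[nhds x₀] fun x => (x - x₀) ^ l := hO.pow l
  -- (x - x₀)^l =o (x - x₀)
  have ho : (fun x => (x - x₀) ^ l) =o[nhds x₀] fun x => x - x₀ := by
    have h1 : Tendsto (fun x : ℝ => (x - x₀) ^ (l - 1)) (nhds x₀) (nhds 0) := by
      have : Tendsto (fun x : ℝ => x - x₀) (nhds x₀) (nhds 0) := by
        simpa using ((continuous_sub_right x₀).tendsto x₀)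
      simpa [zero_pow (by omega : l - 1 ≠ 0)] using this.pow (l - 1)
    have h2 : (fun x : ℝ => (x - x₀) ^ (l - 1)) =o[nhds x₀] (fun _ => (1 : ℝ)) :=
      (isLittleO_one_iff ℝ).2 h1
    have h3 := h2.mul_isBigO (isBigO_refl (fun x : ℝ => x - x₀) (nhds x₀))
    have : (fun x : ℝ => (x - x₀) ^ (l - 1) * (x - x₀)) =o[nhds x₀] fun x => x - x₀ := by
      simpa using h3
    have heq : (fun x : ℝ => (x - x₀) ^ l) = fun x => (x - x₀) ^ (l - 1) * (x - x₀) := by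
      funext x; rw [← pow_succ]; congr 1; omega
    rw [heq]; exact this
  have final : (fun x => g x) =o[nhds x₀] fun x => x - x₀ := (hOg.trans hOl).trans_isLittleO ho
  rw [hasDerivAt_iff_isLittleO]
  simpa [hg0] using final
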